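/- Let T be a finite tree with max degree at most 3 and let x ≥ 1. Then the vertices of T can be partitioned into connected subsets (micro trees) C₁, …, C_m such that each |C_k| ≤ x, m = O(n/x) (e.g., m ≤ 4n/x + 1), and for each k at most two vertices of C_k are adjacent to vertices outside C_k. -/

import Mathlib

namespace MicroMacroProof

open Finset

set_option linter.unusedSectionVars false
set_option linter.unusedVariables false

variable {V : Type*} [Fintype V] [DecidableEq V] (G : SimpleGraph V) [DecidableRel G.Adj]

def rel (S : Finset V) (u v : V) : Prop := G.Adj u v ∧ u ∈ S ∧ v ∈ S

def Rch (S : Finset V) (u v : V) : Prop := Relation.ReflTransGen (rel G S) u v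

def Conn (S : Finset V) : Prop := S.Nonempty ∧ ∀ a ∈ S, ∀ b ∈ S, Rch G S a b

def bdry (S : Finset V) : Finset V := S.filter (fun v => ∃ u, u ∉ S ∧ G.Adj v u)

def ndeg (S : Finset V) (w : V) : ℕ := (S.filter (fun u => G.Adj w u)).card

noncomputable def comp (S : Finset V) (v : V) : Finset V :=
  @Finset.filter _ (fun u => Rch G S v u) (Classical.decPred _) S

variable {G}

lemma rel_symm {S : Finset V} : Symmetric (rel G S) := by
  rintro a b ⟨h1, h2, h3⟩; exact ⟨h1.symm, h3, h2⟩

lemma rch_symm {S : Finset V} {a b : V} (h : Rch G S a b) : Rch G S b a :=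
  (@Relation.ReflTransGen.stdSymm _ (rel G S) ⟨fun a b h => rel_symm h⟩).symm _ _ h

lemma rch_mono {S T : Finset V} (hST : S ⊆ T) {a b : V} (h : Rch G S a b) :
    Rch G T a b := by
  induction h with
  | refl => exact Relation.ReflTransGen.refl
  | tail _ hbc ih => exact ih.tail ⟨hbc.1, hST hbc.2.1, hST hbc.2.2⟩

lemma conn_singleton (v : V) : Conn G {v} := by
  refine ⟨⟨v, mem_singleton_self v⟩, ?_⟩
  intro a ha b hb
  rw [mem_singleton] at ha hb
  subst ha; subst hb; exact Relation.ReflTransGen.refl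

lemma conn_union {A B : Finset V} {a b : V} (hA : Conn G A) (hB : Conn G B)
    (ha : a ∈ A) (hb : b ∈ B) (hab : G.Adj a b) : Conn G (A ∪ B) := by
  have hstep : Rch G (A ∪ B) a b :=
    Relation.ReflTransGen.single ⟨hab, mem_union_left _ ha, mem_union_right _ hb⟩
  refine ⟨⟨a, mem_union_left _ ha⟩, ?_⟩
  intro u hu v hv
  have key : ∀ w ∈ A ∪ B, Rch G (A ∪ B) a w := by
    intro w hw
    rcases mem_union.mp hw with h | h
    · exact rch_mono subset_union_left (hA.2 a ha w h)
    · exact hstep.trans (rch_mono subset_union_right (hB.2 b hb w h))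
  exact (rch_symm (key u hu)).trans (key v hv)

lemma conn_insert {A : Finset V} {a w : V} (hA : Conn G A) (ha : a ∈ A)
    (hw : G.Adj a w) : Conn G (insert w A) := by
  have := conn_union hA (conn_singleton w) ha (mem_singleton_self w) hw
  rwa [union_comm, ← insert_eq] at this

lemma mem_comp {S : Finset V} {v u : V} : u ∈ comp G S v ↔ u ∈ S ∧ Rch G S v u := by
  unfold comp; exact @Finset.mem_filter _ _ (Classical.decPred _) _ _

lemma comp_subset {S : Finset V} {v : V} : comp G S v ⊆ S := by
  intro u hu; exact (mem_comp.mp hu).1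

lemma mem_comp_self {S : Finset V} {v : V} (hv : v ∈ S) : v ∈ comp G S v :=
  mem_comp.mpr ⟨hv, Relation.ReflTransGen.refl⟩

lemma comp_closed {S : Finset V} {v a b : V} (ha : a ∈ comp G S v) (hb : b ∈ S)
    (hab : G.Adj a b) : b ∈ comp G S v := by
  rw [mem_comp] at ha ⊢
  exact ⟨hb, ha.2.tail ⟨hab, ha.1, hb⟩⟩

lemma rch_comp {S : Finset V} {v u : V} (hv : v ∈ S) (h : Rch G S v u) :
    Rch G (comp G S v) v u := by
  induction h with
  | refl => exact Relation.ReflTransGen.refl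
  | @tail b c hvb hbc ih =>
      refine ih.tail ⟨hbc.1, ?_, ?_⟩
      · exact mem_comp.mpr ⟨hbc.2.1, hvb⟩
      · exact mem_comp.mpr ⟨hbc.2.2, hvb.tail hbc⟩

lemma comp_conn {S : Finset V} {v : V} (hv : v ∈ S) : Conn G (comp G S v) := by
  refine ⟨⟨v, mem_comp_self hv⟩, ?_⟩
  intro a ha b hb
  rw [mem_comp] at ha hb
  exact (rch_symm (rch_comp hv ha.2)).trans (rch_comp hv hb.2)

lemma comp_eq_of_mem {S : Finset V} {v u : V} (hu : u ∈ comp G S v) :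
    comp G S v = comp G S u := by
  rw [mem_comp] at hu
  ext z
  simp only [mem_comp]
  constructor
  · rintro ⟨hz, hvz⟩; exact ⟨hz, (rch_symm hu.2).trans hvz⟩
  · rintro ⟨hz, huz⟩; exact ⟨hz, hu.2.trans huz⟩

/-- every vertex of a chain from `a` with `a ∈ S` gives a walk in `G` with support in `S` -/
lemma rch_walk {S : Finset V} {a b : V} (h : Rch G S a b) (ha : a ∈ S) :
    ∃ p : G.Walk a b, ∀ z ∈ p.support, z ∈ S := by
  induction h with
  | refl => exact ⟨SimpleGraph.Walk.nil, by simp [ha]⟩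
  | @tail b c hab hbc ih =>
      obtain ⟨p, hp⟩ := ih
      refine ⟨p.concat hbc.1, ?_⟩
      intro z hz
      rw [SimpleGraph.Walk.support_concat] at hz
      simp only [List.concat_eq_append, List.mem_append, List.mem_singleton] at hz
      rcases hz with hz | hz
      · exact hp z hz
      · subst hz; exact hbc.2.2

lemma touch_aux {S : Finset V} {w : V} : ∀ {a : V}, Rch G S a w → a ∈ S.erase w →
    ∃ z ∈ comp G (S.erase w) a, G.Adj z w := by
  intro a h
  induction h using Relation.ReflTransGen.head_induction_on with
  | refl => intro hu; exact absurd rfl (mem_erase.mp hu).1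
  | @head a c hac hcw ih =>
      intro ha
      by_cases hc : c = w
      · subst hc; exact ⟨a, mem_comp_self ha, hac.1⟩
      · have hc' : c ∈ S.erase w := mem_erase.mpr ⟨hc, hac.2.2⟩
        obtain ⟨z, hz, hzw⟩ := ih hc'
        have hca : c ∈ comp G (S.erase w) a := comp_closed (mem_comp_self ha) hc' hac.1
        rw [comp_eq_of_mem hca]
        exact ⟨z, hz, hzw⟩

lemma touch {S : Finset V} {w u : V} (hw : w ∈ S) (hconn : Conn G S)
    (hu : u ∈ S.erase w) : ∃ z ∈ comp G (S.erase w) u, G.Adj z w :=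
  touch_aux (hconn.2 u (mem_of_mem_erase hu) w hw) hu


/-- In an acyclic graph, there is at most one edge between two disjoint connected sets. -/
lemma uniq (hacyc : G.IsAcyclic) {A B : Finset V} {a a' b b' : V}
    (hA : Conn G A) (hB : Conn G B) (hd : Disjoint A B)
    (haA : a ∈ A) (ha'A : a' ∈ A) (hbB : b ∈ B) (hb'B : b' ∈ B)
    (e : G.Adj a b) (e' : G.Adj a' b') : a = a' ∧ b = b' := by
  by_contra hcon
  have hne : s(a, b) ≠ s(a', b') := by
    intro h
    rw [Sym2.eq_iff] at h
    rcases h with ⟨h1, h2⟩ | ⟨h1, h2⟩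
    · exact hcon ⟨h1, h2⟩
    · subst h1; exact (disjoint_left.mp hd haA) hb'B
  obtain ⟨pA, hpA⟩ := rch_walk (hA.2 a haA a' ha'A) haA
  obtain ⟨pB, hpB⟩ := rch_walk (hB.2 b' hb'B b hbB) hb'B
  set W : G.Walk a b := pA.append (SimpleGraph.Walk.cons e' pB) with hW
  have heW : s(a, b) ∉ W.edges := by
    intro h
    rw [hW, SimpleGraph.Walk.edges_append, List.mem_append] at h
    rcases h with h | h
    · have : b ∈ pA.support := by
        have : s(b, a) ∈ pA.edges := by rwa [Sym2.eq_swap] at h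
        exact SimpleGraph.Walk.fst_mem_support_of_mem_edges pA this
      exact (disjoint_left.mp hd (hpA b this)) hbB
    · rw [SimpleGraph.Walk.edges_cons, List.mem_cons] at h
      rcases h with h | h
      · exact hne h
      · have : a ∈ pB.support := SimpleGraph.Walk.fst_mem_support_of_mem_edges pB h
        exact (disjoint_left.mp hd haA) (hpB a this)
  have hab : a ≠ b := fun h => (disjoint_left.mp hd haA) (h ▸ hbB)
  have huniq := SimpleGraph.isAcyclic_iff_path_unique.mp hacyc
    (⟨SimpleGraph.Walk.cons e SimpleGraph.Walk.nil, by simp [hab]⟩ : G.Path a b)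
    (⟨W.bypass, W.bypass_isPath⟩ : G.Path a b)
  have hval : W.bypass = SimpleGraph.Walk.cons e SimpleGraph.Walk.nil :=
    congrArg Subtype.val huniq.symm
  have : s(a, b) ∈ W.bypass.edges := by
    rw [hval, SimpleGraph.Walk.edges_cons]; simp
  exact heW (SimpleGraph.Walk.edges_bypass_subset W this)

/-- A vertex outside a connected set has at most one neighbour in it (acyclic graph). -/
lemma uniq_nbr (hacyc : G.IsAcyclic) {C : Finset V} {w d d' : V}
    (hC : Conn G C) (hw : w ∉ C) (hd : d ∈ C) (hd' : d' ∈ C)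
    (e : G.Adj d w) (e' : G.Adj d' w) : d = d' := by
  have hdisj : Disjoint C {w} := by
    rw [disjoint_singleton_right]; exact hw
  exact (uniq hacyc hC (conn_singleton w) hdisj hd hd'
    (mem_singleton_self w) (mem_singleton_self w) e e').1


/-- Splitting a connected set at a vertex of (local) degree ≤ 2 into at most two components. -/
lemma vertexSplit (hacyc : G.IsAcyclic) {T : Finset V} {w u₀ : V}
    (hT : Conn G T) (hw : w ∈ T) (hdeg2 : ndeg G T w ≤ 2) (hu₀ : u₀ ∈ T.erase w) :
    ∃ C₁ C₂ : Finset V,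
      u₀ ∈ C₁ ∧ Conn G C₁ ∧
      C₁ ∪ C₂ = T.erase w ∧ Disjoint C₁ C₂ ∧
      (∀ v ∈ C₁, ∀ u ∈ T.erase w, G.Adj v u → u ∈ C₁) ∧
      (∀ v ∈ C₂, ∀ u ∈ T.erase w, G.Adj v u → u ∈ C₂) ∧
      (∃ z ∈ C₁, G.Adj z w) ∧
      (C₂.Nonempty → Conn G C₂ ∧ ∃ z ∈ C₂, G.Adj z w) ∧
      Conn G (insert w C₁) ∧ Conn G (insert w C₂) ∧
      (ndeg G T w ≤ 1 → C₂ = ∅) := by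
  classical
  set U : Finset V := T.erase w with hU
  set C₁ : Finset V := comp G U u₀ with hC₁
  set C₂ : Finset V := U \ C₁ with hC₂
  have hC₁U : C₁ ⊆ U := comp_subset
  have hC₂U : C₂ ⊆ U := sdiff_subset
  have hUT : U ⊆ T := erase_subset _ _
  have hcup : C₁ ∪ C₂ = U := by
    rw [hC₂, union_sdiff_of_subset hC₁U]
  have hdisj : Disjoint C₁ C₂ := disjoint_sdiff
  have hmem₀ : u₀ ∈ C₁ := mem_comp_self hu₀
  have hconn₁ : Conn G C₁ := comp_conn hu₀
  have hclosed₁ : ∀ v ∈ C₁, ∀ u ∈ U, G.Adj v u → u ∈ C₁ := by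
    intro v hv u hu hadj; exact comp_closed hv hu hadj
  have hclosed₂ : ∀ v ∈ C₂, ∀ u ∈ U, G.Adj v u → u ∈ C₂ := by
    intro v hv u hu hadj
    rw [hC₂, mem_sdiff] at hv ⊢
    refine ⟨hu, fun huC₁ => hv.2 (hclosed₁ u huC₁ v hv.1 hadj.symm)⟩
  -- each component contains a unique neighbour of w
  have htouch : ∀ u ∈ U, ∃ z ∈ comp G U u, G.Adj z w := by
    intro u hu; exact touch hw hT hu
  obtain ⟨z₁, hz₁C, hz₁w⟩ := htouch u₀ hu₀
  have hwU : w ∉ U := fun h => (mem_erase.mp h).1 rfl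
  -- comps of members of C₂ are all equal to each other
  have hcompmem : ∀ u ∈ U, u ∈ comp G U u := fun u hu => mem_comp_self hu
  have hcomp_eq_C₁ : ∀ u ∈ C₁, comp G U u = C₁ := by
    intro u hu; exact (comp_eq_of_mem hu).symm
  have key₂ : ∀ u ∈ C₂, ∀ u' ∈ C₂, comp G U u = comp G U u' := by
    intro u hu u' hu'
    by_contra hne
    obtain ⟨z, hzC, hzw⟩ := htouch u (hC₂U hu)
    obtain ⟨z', hz'C, hz'w⟩ := htouch u' (hC₂U hu')
    -- the three comps C₁, comp u, comp u' are pairwise distinct,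
    -- giving three distinct neighbours of w
    have hu1 : comp G U u ≠ C₁ := by
      intro h
      have : u ∈ C₁ := h ▸ hcompmem u (hC₂U hu)
      exact (mem_sdiff.mp hu).2 this
    have hu'1 : comp G U u' ≠ C₁ := by
      intro h
      have : u' ∈ C₁ := h ▸ hcompmem u' (hC₂U hu')
      exact (mem_sdiff.mp hu').2 this
    have hdisj1 : ∀ {X Y : Finset V} {a : V}, X = comp G U a → Y = comp G U a → X ≠ Y → False :=
      by intro X Y a h1 h2 h3; exact h3 (h1.trans h2.symm)
    have hzz' : z ≠ z' := by
      intro h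
      subst h
      have h1 : comp G U u = comp G U z := comp_eq_of_mem hzC
      have h2 : comp G U u' = comp G U z := comp_eq_of_mem hz'C
      exact hne (h1.trans h2.symm)
    have hzz₁ : z ≠ z₁ := by
      intro h
      subst h
      have h1 : comp G U u = comp G U z := comp_eq_of_mem hzC
      have h2 : C₁ = comp G U z := comp_eq_of_mem hz₁C
      exact hu1 (h1.trans h2.symm)
    have hz'z₁ : z' ≠ z₁ := by
      intro h
      subst h
      have h1 : comp G U u' = comp G U z' := comp_eq_of_mem hz'C
      have h2 : C₁ = comp G U z' := comp_eq_of_mem hz₁C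
      exact hu'1 (h1.trans h2.symm)
    -- three distinct neighbours of w in T
    have hsub : {z, z', z₁} ⊆ T.filter (fun u => G.Adj w u) := by
      intro y hy
      simp only [mem_insert, mem_singleton] at hy
      rcases hy with rfl | rfl | rfl
      · exact mem_filter.mpr ⟨hUT ((comp_subset : comp G U u ⊆ U) hzC), hzw.symm⟩
      · exact mem_filter.mpr ⟨hUT ((comp_subset : comp G U u' ⊆ U) hz'C), hz'w.symm⟩
      · exact mem_filter.mpr ⟨hUT (hC₁U hz₁C), hz₁w.symm⟩
    have hcard : 3 ≤ ndeg G T w := by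
      have h3 : ({z, z', z₁} : Finset V).card = 3 := by
        rw [card_insert_of_notMem (by simp [hzz', hzz₁]),
            card_insert_of_notMem (by simp [hz'z₁]), card_singleton]
      rw [ndeg, ← h3]
      exact card_le_card hsub
    omega
  have hC₂conn : C₂.Nonempty → Conn G C₂ ∧ ∃ z ∈ C₂, G.Adj z w := by
    rintro ⟨u₂, hu₂⟩
    have hcomp : C₂ = comp G U u₂ := by
      apply Subset.antisymm
      · intro v hv
        have := key₂ v hv u₂ hu₂
        rw [← this]
        exact hcompmem v (hC₂U hv)
      · intro v hv
        rw [hC₂, mem_sdiff]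
        refine ⟨comp_subset hv, fun hvC₁ => ?_⟩
        have h1 : comp G U u₂ = comp G U v := comp_eq_of_mem hv
        have h2 : comp G U v = C₁ := hcomp_eq_C₁ v hvC₁
        have : u₂ ∈ C₁ := (h1.trans h2) ▸ hcompmem u₂ (hC₂U hu₂)
        exact (mem_sdiff.mp hu₂).2 this
    constructor
    · rw [hcomp]; exact comp_conn (hC₂U hu₂)
    · obtain ⟨z, hz, hzw⟩ := htouch u₂ (hC₂U hu₂)
      exact ⟨z, hcomp ▸ hz, hzw⟩
  have hdeg1 : ndeg G T w ≤ 1 → C₂ = ∅ := by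
    intro h1
    by_contra hne
    obtain ⟨u₂, hu₂⟩ := nonempty_of_ne_empty hne
    obtain ⟨-, z₂, hz₂, hz₂w⟩ := hC₂conn ⟨u₂, hu₂⟩
    have hzz : z₂ ≠ z₁ := by
      intro h
      subst h
      exact (mem_sdiff.mp hz₂).2 hz₁C
    have hsub : {z₂, z₁} ⊆ T.filter (fun u => G.Adj w u) := by
      intro y hy
      simp only [mem_insert, mem_singleton] at hy
      rcases hy with rfl | rfl
      · exact mem_filter.mpr ⟨hUT (hC₂U hz₂), hz₂w.symm⟩
      · exact mem_filter.mpr ⟨hUT (hC₁U hz₁C), hz₁w.symm⟩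
    have : 2 ≤ ndeg G T w := by
      have h2 : ({z₂, z₁} : Finset V).card = 2 := by
        rw [card_insert_of_notMem (by simp [hzz]), card_singleton]
      rw [ndeg, ← h2]
      exact card_le_card hsub
    omega
  refine ⟨C₁, C₂, hmem₀, hconn₁, hcup, hdisj, hclosed₁, hclosed₂, ⟨z₁, hz₁C, hz₁w⟩,
    hC₂conn, ?_, ?_, hdeg1⟩
  · exact conn_insert hconn₁ hz₁C hz₁w
  · rcases eq_empty_or_nonempty C₂ with h | h
    · rw [h]
      simpa using conn_singleton (G := G) w
    · obtain ⟨hc, z, hz, hzw⟩ := hC₂conn h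
      exact conn_insert hc hz hzw


lemma rch_reach {S : Finset V} {a b : V} (h : Rch G S a b) (ha : a ∈ S) :
    ∀ hb : b ∈ S, (G.induce (↑S : Set V)).Reachable ⟨a, by simpa using ha⟩
      ⟨b, by simpa using hb⟩ := by
  induction h with
  | refl => intro hb; exact SimpleGraph.Reachable.refl _
  | @tail b c hab hbc ih =>
      intro hc
      have hb : b ∈ S := hbc.2.1
      have step : (G.induce (↑S : Set V)).Adj ⟨b, by simpa using hb⟩ ⟨c, by simpa using hc⟩ :=
        hbc.1
      exact (ih hb).trans step.reachable

lemma conn_induce {S : Finset V} (h : Conn G S) : (G.induce (↑S : Set V)).Connected := by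
  have hne : Nonempty (↑S : Set V) := by
    obtain ⟨v, hv⟩ := h.1
    exact ⟨⟨v, by simpa using hv⟩⟩
  rw [SimpleGraph.connected_iff]
  refine ⟨?_, hne⟩
  rintro ⟨u, hu⟩ ⟨v, hv⟩
  have hu' : u ∈ S := by simpa using hu
  have hv' : v ∈ S := by simpa using hv
  exact rch_reach (h.2 u hu' v hv') hu' hv'

lemma conn_univ (hconn : G.Connected) : Conn G (univ : Finset V) := by
  refine ⟨univ_nonempty_iff.mpr hconn.nonempty, ?_⟩
  intro a _ b _
  obtain ⟨p⟩ := hconn.preconnected a b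
  induction p with
  | nil => exact Relation.ReflTransGen.refl
  | @cons u v w h p ih =>
      exact Relation.ReflTransGen.head ⟨h, mem_univ _, mem_univ _⟩ (ih (mem_univ _) (mem_univ _))

lemma ndeg_univ_eq_degree (w : V) : ndeg G univ w = G.degree w := by
  rw [ndeg, ← SimpleGraph.neighborFinset_eq_filter, SimpleGraph.degree]

lemma ndeg_le_univ {S : Finset V} (w : V) : ndeg G S w ≤ ndeg G univ w :=
  card_le_card (filter_subset_filter _ (subset_univ S))

lemma ndeg_lt_of_missing (hdeg : ∀ v : V, G.degree v ≤ 3) {S : Finset V} {w d : V}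
    (hd : d ∉ S) (hadj : G.Adj w d) : ndeg G S w ≤ 2 := by
  have hss : S.filter (fun u => G.Adj w u) ⊂ univ.filter (fun u => G.Adj w u) := by
    refine Finset.ssubset_iff_of_subset (filter_subset_filter _ (subset_univ S)) |>.mpr ?_
    exact ⟨d, mem_filter.mpr ⟨mem_univ _, hadj⟩, fun h => hd (mem_of_mem_filter d h)⟩
  have h1 : ndeg G S w < ndeg G univ w := card_lt_card hss
  have h2 : ndeg G univ w ≤ 3 := by rw [ndeg_univ_eq_degree]; exact hdeg w
  omega

/-- A tree on a nontrivial vertex set has a vertex of degree ≤ 2 (in fact ≤ 1). -/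
lemma exists_small_deg (hconn : G.Connected) (hacyc : G.IsAcyclic)
    (hdeg : ∀ v : V, G.degree v ≤ 3) : ∃ r : V, ndeg G univ r ≤ 2 := by
  by_contra hcon
  push_neg at hcon
  have hdeg3 : ∀ v : V, G.degree v = 3 := by
    intro v
    have := hcon v
    rw [ndeg_univ_eq_degree] at this
    have := hdeg v
    omega
  have hsum : ∑ v : V, G.degree v = 2 * G.edgeFinset.card :=
    SimpleGraph.sum_degrees_eq_twice_card_edges G
  have htree : G.IsTree := ⟨hconn, hacyc⟩
  have hedge : G.edgeFinset.card + 1 = Fintype.card V := htree.card_edgeFinset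
  have hsum3 : ∑ v : V, G.degree v = 3 * Fintype.card V := by
    rw [Finset.sum_congr rfl (fun v _ => hdeg3 v)]
    simp [Finset.card_univ, mul_comm]
  have hpos : 1 ≤ Fintype.card V := Fintype.card_pos_iff.mpr hconn.nonempty
  omega


lemma cross {S D : Finset V} {a b : V} (h : Rch G S a b) (ha : a ∈ D) (hb : b ∉ D) :
    ∃ p q : V, p ∈ D ∧ q ∈ S ∧ q ∉ D ∧ G.Adj p q := by
  induction h using Relation.ReflTransGen.head_induction_on with
  | refl => exact absurd ha hb
  | @head a c hac hcb ih =>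
      by_cases hc : c ∈ D
      · exact ih hc
      · exact ⟨a, c, ha, hac.2.2, hc, hac.1⟩

lemma sdiff_split {S X Y : Finset V} {w : V} (hw : w ∈ S)
    (hcup : X ∪ Y = S.erase w) (hd : Disjoint X Y) : S \ X = insert w Y := by
  have hXe : X ⊆ S.erase w := hcup ▸ subset_union_left
  have hYe : Y ⊆ S.erase w := hcup ▸ subset_union_right
  ext v
  simp only [mem_sdiff, mem_insert]
  constructor
  · rintro ⟨hvS, hvX⟩
    by_cases hvw : v = w
    · exact Or.inl hvw
    · have : v ∈ X ∪ Y := hcup ▸ mem_erase.mpr ⟨hvw, hvS⟩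
      rcases mem_union.mp this with h | h
      · exact absurd h hvX
      · exact Or.inr h
  · rintro (rfl | hvY)
    · exact ⟨hw, fun hX => (mem_erase.mp (hXe hX)).1 rfl⟩
    · exact ⟨mem_of_mem_erase (hYe hvY), fun hX => (disjoint_left.mp hd hX) hvY⟩

lemma sdiff_union_piece {S T X : Finset V} (hT : T ⊆ S) (hX : X ⊆ T) :
    S \ X = (S \ T) ∪ (T \ X) := by
  ext v
  simp only [mem_sdiff, mem_union]
  have h1 : v ∈ T → v ∈ S := fun h => hT h
  have h2 : v ∈ X → v ∈ T := fun h => hX h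
  tauto


lemma main (hacyc : G.IsAcyclic) (hdeg : ∀ v : V, G.degree v ≤ 3) {x : ℕ} (hx : 1 ≤ x) :
    ∀ n : ℕ, ∀ S : Finset V, S.card ≤ n → Conn G S →
    (∃ r ∈ S, bdry G S ⊆ {r} ∧ ndeg G S r ≤ 2) →
    ∃ P : Finset (Finset V),
      (∀ C ∈ P, C ⊆ S ∧ C.Nonempty ∧ C.card ≤ x ∧ Conn G C ∧ (bdry G C).card ≤ 2) ∧
      (∀ C ∈ P, ∀ C' ∈ P, C ≠ C' → Disjoint C C') ∧
      P.biUnion id = S ∧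
      P.card * x ≤ max (4 * S.card + 2 - x) x := by
  intro n
  induction n with
  | zero =>
      intro S hcard hconn _
      exact absurd (card_pos.mpr hconn.1) (by omega)
  | succ n IH =>
      intro S hcard hconn hstruct
      obtain ⟨r, hrS, hbdr, hdegr⟩ := hstruct
      by_cases hbase : S.card ≤ x
      · refine ⟨{S}, ?_, ?_, ?_, ?_⟩
        · intro C hC
          rw [mem_singleton] at hC
          rw [hC]
          refine ⟨Subset.rfl, hconn.1, hbase, hconn, ?_⟩
          calc (bdry G S).card ≤ ({r} : Finset V).card := card_le_card hbdr
            _ ≤ 2 := by simp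
        · intro C hC C' hC' hne
          rw [mem_singleton] at hC hC'
          exact absurd (hC.trans hC'.symm) hne
        · simp
        · simp only [card_singleton, one_mul]; exact le_max_right _ _
      push_neg at hbase
      classical
      set N := S.card with hN
      set t := (x + 3) / 4 with ht
      set γ := (N - t + 1) / 2 with hγ
      have hNx : x < N := hbase
      have htx : t ≤ x := by omega
      have ht1 : 1 ≤ t := by omega
      set Pnd : Finset V → Prop := fun D =>
        D ⊆ S ∧ D.Nonempty ∧ r ∉ D ∧ Conn G D ∧ Conn G (S \ D) with hPnd
      -- STEP 1 : a pendant subtree with at least γ vertices exists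
      have hrase : (S.erase r).Nonempty := by
        rw [← card_pos, card_erase_of_mem hrS]; omega
      obtain ⟨u₀, hu₀⟩ := hrase
      obtain ⟨A₁, A₂, hA₀, hAconn₁, hAcup, hAdisj, _, _, _, hA₂, hAins₁, hAins₂, _⟩ :=
        vertexSplit hacyc hconn hrS hdegr hu₀
      have hA₁e : A₁ ⊆ S.erase r := hAcup ▸ subset_union_left
      have hA₂e : A₂ ⊆ S.erase r := hAcup ▸ subset_union_right
      have hA₁S : A₁ ⊆ S := hA₁e.trans (erase_subset _ _)
      have hA₂S : A₂ ⊆ S := hA₂e.trans (erase_subset _ _)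
      have hAcard : A₁.card + A₂.card = N - 1 := by
        rw [← card_union_of_disjoint hAdisj, hAcup, card_erase_of_mem hrS]
      have hsd₁ : S \ A₁ = insert r A₂ := sdiff_split hrS hAcup hAdisj
      have hsd₂ : S \ A₂ = insert r A₁ :=
        sdiff_split hrS (by rw [union_comm]; exact hAcup) hAdisj.symm
      have hex1 : ∃ D, Pnd D ∧ γ ≤ D.card := by
        by_cases hc : γ ≤ A₁.card
        · refine ⟨A₁, ⟨hA₁S, ⟨u₀, hA₀⟩, fun h => (mem_erase.mp (hA₁e h)).1 rfl,
            hAconn₁, ?_⟩, hc⟩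
          rw [hsd₁]; exact hAins₂
        · have hc₂ : γ ≤ A₂.card := by omega
          have hA₂ne : A₂.Nonempty := by
            rw [← card_pos]; omega
          obtain ⟨hA₂conn, -⟩ := hA₂ hA₂ne
          refine ⟨A₂, ⟨hA₂S, hA₂ne, fun h => (mem_erase.mp (hA₂e h)).1 rfl,
            hA₂conn, ?_⟩, hc₂⟩
          rw [hsd₂]; exact hAins₁
      -- STEP 2 : minimal pendant subtree with ≥ γ vertices is not too large
      set Fg : Finset (Finset V) := S.powerset.filter (fun D => Pnd D ∧ γ ≤ D.card) with hFg
      have hFgne : Fg.Nonempty := by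
        obtain ⟨D, hD, hDγ⟩ := hex1
        exact ⟨D, mem_filter.mpr ⟨mem_powerset.mpr hD.1, hD, hDγ⟩⟩
      obtain ⟨D₀, hD₀F, hD₀min⟩ := Finset.exists_min_image Fg (fun D => D.card) hFgne
      obtain ⟨⟨hD₀S, hD₀ne, hD₀r, hD₀conn, hD₀cconn⟩, hD₀γ⟩ := (mem_filter.mp hD₀F).2
      have hD₀small : D₀.card + t ≤ N := by
        obtain ⟨b₀, hb₀⟩ := hD₀cconn.1
        obtain ⟨a₀, ha₀⟩ := hD₀ne
        obtain ⟨d₀, w₀, hd₀D, hw₀S, hw₀D, hdw₀⟩ :=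
          cross (hconn.2 a₀ (hD₀S ha₀) b₀ (mem_sdiff.mp hb₀).1) ha₀ (mem_sdiff.mp hb₀).2
        have hdeg₀ : ndeg G D₀ d₀ ≤ 2 := ndeg_lt_of_missing hdeg hw₀D hdw₀
        rcases eq_empty_or_nonempty (D₀.erase d₀) with hder | ⟨u₁, hu₁⟩
        · have h1 : D₀.card ≤ 1 := by
            have h2 := card_erase_of_mem hd₀D
            rw [hder, card_empty] at h2
            omega
          omega
        · obtain ⟨B₁, B₂, hB₀, hBconn₁, hBcup, hBdisj, _, _, _, hB₂, hBins₁, hBins₂, _⟩ :=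
            vertexSplit hacyc hD₀conn hd₀D hdeg₀ hu₁
          have hD₀pos : 1 ≤ D₀.card := card_pos.mpr ⟨a₀, ha₀⟩
          have hBcard : B₁.card + B₂.card + 1 = D₀.card := by
            rw [← card_union_of_disjoint hBdisj, hBcup, card_erase_of_mem hd₀D]
            omega
          have key : ∀ B B' : Finset V, B ∪ B' = D₀.erase d₀ → Disjoint B B' →
              Conn G B → B.Nonempty → Conn G (insert d₀ B') → B.card < γ := by
            intro B B' hcup' hdisj' hconnB hBne hinsB'
            by_contra hge
            push_neg at hge
            have hBD₀ : B ⊆ D₀ := (hcup' ▸ subset_union_left).trans (erase_subset _ _)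
            have hBS : B ⊆ S := hBD₀.trans hD₀S
            have hid : S \ B = (S \ D₀) ∪ insert d₀ B' := by
              rw [sdiff_union_piece hD₀S hBD₀, sdiff_split hd₀D hcup' hdisj']
            have hconnSB : Conn G (S \ B) := by
              rw [hid]
              refine conn_union hD₀cconn hinsB' ?_ (mem_insert_self _ _) hdw₀.symm
              exact mem_sdiff.mpr ⟨hw₀S, hw₀D⟩
            have hmem : B ∈ Fg := by
              refine mem_filter.mpr ⟨mem_powerset.mpr hBS, ⟨hBS, hBne,
                fun h => hD₀r (hBD₀ h), hconnB, hconnSB⟩, hge⟩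
            have hle := hD₀min B hmem
            have hlt : B.card < D₀.card := by
              have := card_le_card (hcup' ▸ subset_union_left : B ⊆ D₀.erase d₀)
              rw [card_erase_of_mem hd₀D] at this
              omega
            omega
          have hB₁γ : B₁.card < γ := key B₁ B₂ hBcup hBdisj hBconn₁ ⟨u₁, hB₀⟩ hBins₂
          have hB₂γ : B₂.card < γ := by
            rcases eq_empty_or_nonempty B₂ with h | h
            · rw [h, card_empty]; omega
            · exact key B₂ B₁ (by rw [union_comm]; exact hBcup) hBdisj.symm (hB₂ h).1 h hBins₁
          omega
      -- STEP 3 : maximal pendant subtree with complement of size ≥ t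
      set Fc : Finset (Finset V) := S.powerset.filter (fun D => Pnd D ∧ D.card + t ≤ N) with hFc
      have hD₀Fc : D₀ ∈ Fc := mem_filter.mpr ⟨mem_powerset.mpr hD₀S,
        ⟨hD₀S, hD₀ne, hD₀r, hD₀conn, hD₀cconn⟩, hD₀small⟩
      obtain ⟨D, hDF, hDmax⟩ := Finset.exists_max_image Fc (fun D => D.card) ⟨D₀, hD₀Fc⟩
      obtain ⟨⟨hDS, hDne, hDr, hDconn, hDcconn⟩, hDt⟩ := (mem_filter.mp hDF).2
      have hDγ : γ ≤ D.card := le_trans hD₀γ (hDmax D₀ hD₀Fc)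
      set R : Finset V := S \ D with hR
      have hRS : R ⊆ S := sdiff_subset
      have hDRcard : D.card + R.card = N := by
        rw [hR, card_sdiff_of_subset hDS]
        have := card_le_card hDS
        omega
      obtain ⟨bR, hbR⟩ := hDcconn.1
      obtain ⟨aD, haD⟩ := hDne
      obtain ⟨d, w, hdD, hwS, hwD, hdw⟩ :=
        cross (hconn.2 aD (hDS haD) bR (mem_sdiff.mp hbR).1) haD (mem_sdiff.mp hbR).2
      have hwR : w ∈ R := mem_sdiff.mpr ⟨hwS, hwD⟩
      have hdR : d ∉ R := fun h => (mem_sdiff.mp h).2 hdD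
      have hDdisjR : Disjoint D R := disjoint_sdiff
      have hbdD : bdry G D ⊆ {d} := by
        intro v hv
        obtain ⟨hvD, u, huD, hadj⟩ := mem_filter.mp hv
        by_cases huS : u ∈ S
        · have huR : u ∈ R := mem_sdiff.mpr ⟨huS, huD⟩
          have := uniq hacyc hDconn hDcconn hDdisjR hvD hdD huR hwR hadj hdw
          rw [mem_singleton]; exact this.1
        · have hvb : v ∈ bdry G S := mem_filter.mpr ⟨hDS hvD, ⟨u, huS, hadj⟩⟩
          have h := hbdr hvb
          rw [mem_singleton] at h
          exact absurd (h ▸ hvD) hDr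
      have hdegD : ndeg G D d ≤ 2 := ndeg_lt_of_missing hdeg hwD hdw
      have hDpos : 1 ≤ D.card := card_pos.mpr ⟨aD, haD⟩
      have hRpos : t ≤ R.card := by omega
      by_cases hcaseA : R.card ≤ x
      · -- CASE A : split off the piece S \ D and recurse on D
        obtain ⟨PD, hPD1, hPD2, hPD3, hPD4⟩ := IH D (by omega) hDconn ⟨d, hdD, hbdD, hdegD⟩
        have hbdR : bdry G R ⊆ {r, w} := by
          intro v hv
          obtain ⟨hvR, u, huR, hadj⟩ := mem_filter.mp hv
          by_cases huS : u ∈ S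
          · have huD : u ∈ D := by
              by_contra huD
              exact huR (mem_sdiff.mpr ⟨huS, huD⟩)
            have := uniq hacyc hDconn hDcconn hDdisjR huD hdD hvR hwR hadj.symm hdw
            rw [this.2]; simp
          · have hvb : v ∈ bdry G S := mem_filter.mpr ⟨hRS hvR, ⟨u, huS, hadj⟩⟩
            have h := hbdr hvb
            rw [mem_singleton] at h
            rw [h]; simp
        refine ⟨insert R PD, ?_, ?_, ?_, ?_⟩
        · intro C hC
          rcases mem_insert.mp hC with rfl | hC
          · refine ⟨hRS, ⟨w, hwR⟩, hcaseA, hDcconn, ?_⟩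
            calc (bdry G R).card ≤ ({r, w} : Finset V).card := card_le_card hbdR
              _ ≤ 2 := (card_insert_le _ _).trans (by simp)
          · obtain ⟨h1, h2, h3, h4, h5⟩ := hPD1 C hC
            exact ⟨h1.trans hDS, h2, h3, h4, h5⟩
        · intro C hC C' hC' hne
          rcases mem_insert.mp hC with rfl | hC <;> rcases mem_insert.mp hC' with rfl | hC'
          · exact absurd rfl hne
          · exact (sdiff_disjoint : Disjoint (S \ D) D).mono_right (hPD1 C' hC').1
          · exact ((sdiff_disjoint : Disjoint (S \ D) D).mono_right (hPD1 C hC).1).symm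
          · exact hPD2 C hC C' hC' hne
        · rw [biUnion_insert, hPD3]
          simp only [id_eq]
          rw [hR]
          exact sdiff_union_of_subset hDS
        · have hm : (insert R PD).card ≤ PD.card + 1 := card_insert_le _ _
          have hMx : (insert R PD).card * x ≤ PD.card * x + x := by
            calc (insert R PD).card * x ≤ (PD.card + 1) * x := Nat.mul_le_mul_right x hm
              _ = PD.card * x + x := by ring
          rw [le_max_iff] at hPD4
          apply le_max_iff.mpr
          left
          rcases hPD4 with h | h <;> omega
      · -- CASE B : split off a small piece Q around w and recurse on D and O
        push_neg at hcaseA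
        have hndegRw : ndeg G R w ≤ 2 := ndeg_lt_of_missing hdeg hdR hdw.symm
        have hRena : (R.erase w).Nonempty := by
          rw [← card_pos, card_erase_of_mem hwR]; omega
        have hConnR : Conn G R := hDcconn
        obtain ⟨Ar, O, hAOsplit, hAOdisj, hArr, hConnQ, hConnO, hOne, hzO, hclosedO, hArcard⟩ :
            ∃ Ar O : Finset V,
              Ar ∪ O = R.erase w ∧ Disjoint Ar O ∧ r ∈ insert w Ar ∧
              Conn G (insert w Ar) ∧ Conn G O ∧ O.Nonempty ∧ (∃ z ∈ O, G.Adj z w) ∧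
              (∀ v ∈ O, ∀ u ∈ R.erase w, G.Adj v u → u ∈ O) ∧ Ar.card < t := by
          by_cases hwr : w = r
          · subst hwr
            have hdeg1 : ndeg G R w ≤ 1 := by
              have hss : R.filter (fun u => G.Adj w u) ⊂ S.filter (fun u => G.Adj w u) := by
                refine (Finset.ssubset_iff_of_subset (filter_subset_filter _ hRS)).mpr ?_
                exact ⟨d, mem_filter.mpr ⟨hDS hdD, hdw.symm⟩,
                  fun h => hdR (mem_of_mem_filter d h)⟩
              have h1 := card_lt_card hss
              have h2 : ndeg G S w ≤ 2 := hdegr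
              unfold ndeg at *
              omega
            obtain ⟨u₁, hu₁⟩ := hRena
            obtain ⟨B₁, B₂, hB₀, hBconn₁, hBcup, hBdisj, hBclosed₁, _, hBz₁, _, _, _, hBemp⟩ :=
              vertexSplit hacyc hConnR hwR hndegRw hu₁
            have hB₂e : B₂ = ∅ := hBemp hdeg1
            refine ⟨∅, B₁, ?_, disjoint_empty_left _, mem_insert_self _ _, ?_,
              hBconn₁, ⟨u₁, hB₀⟩, hBz₁, hBclosed₁, by rw [card_empty]; omega⟩
            · rw [empty_union, ← hBcup, hB₂e, union_empty]
            · have : (insert w (∅ : Finset V)) = ({w} : Finset V) := rfl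
              rw [this]
              exact conn_singleton w
          · have hrR : r ∈ R := mem_sdiff.mpr ⟨hrS, hDr⟩
            have hrRe : r ∈ R.erase w := mem_erase.mpr ⟨fun h => hwr h.symm, hrR⟩
            obtain ⟨B₁, B₂, hB₀, hBconn₁, hBcup, hBdisj, hBclosed₁, hBclosed₂,
              hBz₁, hB₂, hBins₁, hBins₂, -⟩ :=
              vertexSplit hacyc hConnR hwR hndegRw hrRe
            have hB₁R : B₁ ⊆ R.erase w := hBcup ▸ subset_union_left
            have hB₁S : B₁ ⊆ S := (hB₁R.trans (erase_subset _ _)).trans hRS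
            have hcardRe : B₁.card + B₂.card + 1 = R.card := by
              rw [← card_union_of_disjoint hBdisj, hBcup, card_erase_of_mem hwR]
              have : 1 ≤ R.card := card_pos.mpr ⟨w, hwR⟩
              omega
            have hB₁lt : B₁.card < t := by
              by_contra hge
              push_neg at hge
              set Dbig : Finset V := S \ B₁ with hDbig
              have hRsd : R \ B₁ = insert w B₂ := sdiff_split hwR hBcup hBdisj
              have hSRD : S \ R = D := Finset.sdiff_sdiff_eq_self hDS
              have hid : Dbig = D ∪ insert w B₂ := by
                rw [hDbig, sdiff_union_piece hRS (hB₁R.trans (erase_subset _ _)), hSRD, hRsd]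
              have hConnDbig : Conn G Dbig := by
                rw [hid]
                exact conn_union hDconn hBins₂ hdD (mem_insert_self _ _) hdw
              have hrB₁ : r ∈ B₁ := hB₀
              have hPndDbig : Pnd Dbig := by
                refine ⟨sdiff_subset, ⟨d, ?_⟩, ?_, hConnDbig, ?_⟩
                · rw [hid]; exact mem_union_left _ hdD
                · intro h
                  exact (mem_sdiff.mp h).2 hrB₁
                · rw [hDbig, Finset.sdiff_sdiff_eq_self hB₁S]
                  exact hBconn₁
              have hDbigcard : Dbig.card = N - B₁.card := by
                rw [hDbig, card_sdiff_of_subset hB₁S]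
              have hmem : Dbig ∈ Fc := by
                refine mem_filter.mpr ⟨mem_powerset.mpr sdiff_subset, hPndDbig, by omega⟩
              have hle := hDmax Dbig hmem
              have hB₁ltR : B₁.card < R.card := by omega
              omega
            have hB₂ne : B₂.Nonempty := by
              rw [← card_pos]; omega
            obtain ⟨hConnB₂, hz₂⟩ := hB₂ hB₂ne
            exact ⟨B₁, B₂, hBcup, hBdisj, mem_insert_of_mem hB₀, hBins₁, hConnB₂,
              hB₂ne, hz₂, hBclosed₂, hB₁lt⟩
        have hArR : Ar ⊆ R.erase w := hAOsplit ▸ subset_union_left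
        have hOR : O ⊆ R.erase w := hAOsplit ▸ subset_union_right
        have hORS : O ⊆ S := (hOR.trans (erase_subset _ _)).trans hRS
        have hwAr : w ∉ Ar := fun h => (mem_erase.mp (hArR h)).1 rfl
        have hwO : w ∉ O := fun h => (mem_erase.mp (hOR h)).1 rfl
        set Q : Finset V := insert w Ar with hQ
        have hQR : Q ⊆ R := insert_subset hwR (hArR.trans (erase_subset _ _))
        have hrQ : r ∈ Q := hArr
        have hrO : r ∉ O := by
          intro h
          rcases mem_insert.mp hArr with h1 | h1
          · exact (mem_erase.mp (hOR h)).1 h1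
          · exact (disjoint_left.mp hAOdisj h1) h
        have hcards : Ar.card + O.card + 1 = R.card := by
          rw [← card_union_of_disjoint hAOdisj, hAOsplit, card_erase_of_mem hwR]
          have : 1 ≤ R.card := card_pos.mpr ⟨w, hwR⟩
          omega
        obtain ⟨zO, hzOO, hzOw⟩ := hzO
        have hSRD : S \ R = D := Finset.sdiff_sdiff_eq_self hDS
        have hRO : R \ O = Q := by
          rw [hQ]
          exact sdiff_split hwR (by rw [union_comm]; exact hAOsplit) hAOdisj.symm
        have hSO : S \ O = D ∪ Q := by
          rw [sdiff_union_piece hRS (hOR.trans (erase_subset _ _)), hSRD, hRO]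
        have hConnSO : Conn G (S \ O) := by
          rw [hSO]
          exact conn_union hDconn hConnQ hdD (mem_insert_self _ _) hdw
        have hOF : O ∈ Fc := by
          refine mem_filter.mpr ⟨mem_powerset.mpr hORS,
            ⟨hORS, hOne, hrO, hConnO, hConnSO⟩, ?_⟩
          omega
        have hOD : O.card ≤ D.card := hDmax O hOF
        have hbdO : bdry G O ⊆ {zO} := by
          intro v hv
          obtain ⟨hvO, u, huO, hadj⟩ := mem_filter.mp hv
          have hvR : v ∈ R := (hOR.trans (erase_subset _ _)) hvO
          by_cases huS : u ∈ S
          · by_cases huD : u ∈ D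
            · have := uniq hacyc hDconn hDcconn hDdisjR huD hdD hvR hwR hadj.symm hdw
              exact absurd (this.2 ▸ hvO) hwO
            · have huR : u ∈ R := mem_sdiff.mpr ⟨huS, huD⟩
              by_cases huw : u = w
              · subst huw
                rw [mem_singleton]
                exact uniq_nbr hacyc hConnO hwO hvO hzOO hadj hzOw
              · have huRe : u ∈ R.erase w := mem_erase.mpr ⟨huw, huR⟩
                exact absurd (hclosedO v hvO u huRe hadj) huO
          · have hvb : v ∈ bdry G S := mem_filter.mpr ⟨hORS hvO, ⟨u, huS, hadj⟩⟩
            have h := hbdr hvb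
            rw [mem_singleton] at h
            exact absurd (h ▸ hvO) hrO
        have hdegO : ndeg G O zO ≤ 2 := ndeg_lt_of_missing hdeg hwO hzOw
        have hQne : Q.Nonempty := insert_nonempty _ _
        have hQcard : Q.card ≤ t := by
          rw [hQ, card_insert_of_notMem hwAr]; omega
        have hbdQ : bdry G Q ⊆ {r, w} := by
          intro v hv
          obtain ⟨hvQ, u, huQ, hadj⟩ := mem_filter.mp hv
          have hvR : v ∈ R := hQR hvQ
          by_cases huS : u ∈ S
          · by_cases huD : u ∈ D
            · have := uniq hacyc hDconn hDcconn hDdisjR huD hdD hvR hwR hadj.symm hdw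
              rw [this.2]; simp
            · by_cases huO : u ∈ O
              · have hvSO : v ∈ S \ O := by
                  refine mem_sdiff.mpr ⟨hRS hvR, fun hvO => ?_⟩
                  rcases mem_insert.mp hvQ with rfl | hvAr
                  · exact hwO hvO
                  · exact (disjoint_left.mp hAOdisj hvAr) hvO
                have hwSO : w ∈ S \ O := mem_sdiff.mpr ⟨hwS, hwO⟩
                have := uniq hacyc hConnO hConnSO disjoint_sdiff huO hzOO hvSO hwSO
                  hadj.symm hzOw
                rw [this.2]; simp
              · have huR : u ∈ R := mem_sdiff.mpr ⟨huS, huD⟩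
                have huQ' : u ∈ Q := by
                  by_cases huw : u = w
                  · rw [hQ, huw]; exact mem_insert_self _ _
                  · have : u ∈ Ar ∪ O := by
                      rw [hAOsplit]; exact mem_erase.mpr ⟨huw, huR⟩
                    rcases mem_union.mp this with h | h
                    · rw [hQ]; exact mem_insert_of_mem h
                    · exact absurd h huO
                exact absurd huQ' huQ
          · have hvb : v ∈ bdry G S := mem_filter.mpr ⟨hRS hvR, ⟨u, huS, hadj⟩⟩
            have h := hbdr hvb
            rw [mem_singleton] at h
            rw [h]; simp
        obtain ⟨PD, hPD1, hPD2, hPD3, hPD4⟩ := IH D (by omega) hDconn ⟨d, hdD, hbdD, hdegD⟩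
        obtain ⟨PO, hPO1, hPO2, hPO3, hPO4⟩ := IH O (by omega) hConnO ⟨zO, hzOO, hbdO, hdegO⟩
        have hQD : Disjoint Q D := (sdiff_disjoint : Disjoint (S \ D) D).mono_left hQR
        have hQO : Disjoint Q O := by
          rw [disjoint_left]
          intro a haQ haO
          rcases mem_insert.mp haQ with rfl | haAr
          · exact hwO haO
          · exact (disjoint_left.mp hAOdisj haAr) haO
        have hDO : Disjoint D O := hDdisjR.mono_right (hOR.trans (erase_subset _ _))
        refine ⟨insert Q (PD ∪ PO), ?_, ?_, ?_, ?_⟩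
        · intro C hC
          rcases mem_insert.mp hC with rfl | hC
          · refine ⟨hQR.trans hRS, hQne, hQcard.trans htx, hConnQ, ?_⟩
            calc (bdry G Q).card ≤ ({r, w} : Finset V).card := card_le_card hbdQ
              _ ≤ 2 := (card_insert_le _ _).trans (by simp)
          · rcases mem_union.mp hC with hC | hC
            · obtain ⟨h1, h2, h3, h4, h5⟩ := hPD1 C hC
              exact ⟨h1.trans hDS, h2, h3, h4, h5⟩
            · obtain ⟨h1, h2, h3, h4, h5⟩ := hPO1 C hC
              exact ⟨h1.trans hORS, h2, h3, h4, h5⟩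
        · intro C hC C' hC' hne
          rcases mem_insert.mp hC with rfl | hC <;> rcases mem_insert.mp hC' with rfl | hC'
          · exact absurd rfl hne
          · rcases mem_union.mp hC' with h | h
            · exact hQD.mono_right (hPD1 C' h).1
            · exact hQO.mono_right (hPO1 C' h).1
          · rcases mem_union.mp hC with h | h
            · exact (hQD.mono_right (hPD1 C h).1).symm
            · exact (hQO.mono_right (hPO1 C h).1).symm
          · rcases mem_union.mp hC with h | h <;> rcases mem_union.mp hC' with h' | h'
            · exact hPD2 C h C' h' hne
            · exact hDO.mono (hPD1 C h).1 (hPO1 C' h').1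
            · exact (hDO.mono (hPD1 C' h').1 (hPO1 C h).1).symm
            · exact hPO2 C h C' h' hne
        · have hcupDO : (PD ∪ PO).biUnion id = D ∪ O := by
            ext v
            simp only [mem_biUnion, mem_union, id_eq]
            constructor
            · rintro ⟨c, hc | hc, hvc⟩
              · exact Or.inl (by rw [← hPD3]; exact mem_biUnion.mpr ⟨c, hc, hvc⟩)
              · exact Or.inr (by rw [← hPO3]; exact mem_biUnion.mpr ⟨c, hc, hvc⟩)
            · rintro (hv | hv)
              · rw [← hPD3] at hv
                obtain ⟨c, hc, hvc⟩ := mem_biUnion.mp hv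
                exact ⟨c, Or.inl hc, hvc⟩
              · rw [← hPO3] at hv
                obtain ⟨c, hc, hvc⟩ := mem_biUnion.mp hv
                exact ⟨c, Or.inr hc, hvc⟩
          rw [biUnion_insert, hcupDO]
          simp only [id_eq]
          have hQOR : Q ∪ O = R := by
            rw [hQ, insert_union, hAOsplit, insert_erase hwR]
          rw [union_left_comm, hQOR, union_comm, hR]
          exact sdiff_union_of_subset hDS
        · have hm : (insert Q (PD ∪ PO)).card ≤ PD.card + PO.card + 1 := by
            calc (insert Q (PD ∪ PO)).card ≤ (PD ∪ PO).card + 1 := card_insert_le _ _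
              _ ≤ PD.card + PO.card + 1 := by
                  have := card_union_le PD PO
                  omega
          have hMx : (insert Q (PD ∪ PO)).card * x ≤ PD.card * x + PO.card * x + x := by
            calc (insert Q (PD ∪ PO)).card * x ≤ (PD.card + PO.card + 1) * x :=
                Nat.mul_le_mul_right x hm
              _ = PD.card * x + PO.card * x + x := by ring
          rw [le_max_iff] at hPD4 hPO4
          apply le_max_iff.mpr
          left
          have hQpos : 1 ≤ Q.card := card_pos.mpr hQne
          have hQcard' : Q.card = Ar.card + 1 := by
            rw [hQ, card_insert_of_notMem hwAr]
          rcases hPD4 with h | h <;> rcases hPO4 with h' | h' <;> omega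

end MicroMacroProof



open Finset MicroMacroProof in

/-- Micro-macro decomposition (Alstrup et al.): the vertices of a tree with
maximum degree at most 3 can be partitioned into `m` nonempty connected
pieces (micro trees), each of size at most `x`, with `m ≤ 4n/x + 1`
(stated as `m * x ≤ 4 * n + x`), such that each piece has at most two
boundary vertices (vertices adjacent to vertices outside the piece). -/
theorem micro_macro_decomposition {V : Type*} [Fintype V] [DecidableEq V]
    (G : SimpleGraph V) [DecidableRel G.Adj]
    (hconn : G.Connected) (hacyc : G.IsAcyclic)
    (hdeg : ∀ v : V, G.degree v ≤ 3) (x : ℕ) (hx : 1 ≤ x) :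
    ∃ (m : ℕ) (C : Fin m → Finset V),
      (∀ k, (C k).Nonempty) ∧
      (∀ k, (C k).card ≤ x) ∧
      (∀ k, (G.induce (↑(C k) : Set V)).Connected) ∧
      (∀ k l, k ≠ l → Disjoint (C k) (C l)) ∧
      (∀ v : V, ∃ k, v ∈ C k) ∧
      m * x ≤ 4 * Fintype.card V + x ∧
      (∀ k, ((C k).filter fun v => ∃ u : V, u ∉ C k ∧ G.Adj v u).card ≤ 2) := by
  obtain ⟨r, hr⟩ := exists_small_deg (G := G) hconn hacyc hdeg
  have hbdu : bdry G (univ : Finset V) ⊆ {r} := by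
    intro v hv
    obtain ⟨-, u, hu, -⟩ := mem_filter.mp hv
    exact absurd (mem_univ u) hu
  obtain ⟨P, hP1, hP2, hP3, hP4⟩ :=
    main (G := G) hacyc hdeg hx (Fintype.card V) univ (by rw [card_univ])
      (conn_univ hconn) ⟨r, mem_univ r, hbdu, hr⟩
  refine ⟨P.card, fun k => (P.equivFin.symm k : {s // s ∈ P}).1, ?_, ?_, ?_, ?_, ?_, ?_, ?_⟩
  · intro k
    exact (hP1 _ (P.equivFin.symm k).2).2.1
  · intro k
    exact (hP1 _ (P.equivFin.symm k).2).2.2.1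
  · intro k
    exact conn_induce (hP1 _ (P.equivFin.symm k).2).2.2.2.1
  · intro k l hkl
    apply hP2 _ (P.equivFin.symm k).2 _ (P.equivFin.symm l).2
    intro hval
    exact hkl (by
      have : P.equivFin.symm k = P.equivFin.symm l := Subtype.ext hval
      exact P.equivFin.symm.injective.eq_iff.mp this ▸ rfl)
  · intro v
    have hv : v ∈ P.biUnion id := by rw [hP3]; exact mem_univ v
    obtain ⟨c, hc, hvc⟩ := mem_biUnion.mp hv
    refine ⟨P.equivFin ⟨c, hc⟩, ?_⟩
    simp only [Equiv.symm_apply_apply]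
    exact hvc
  · have hb := hP4
    rw [card_univ, le_max_iff] at hb
    rcases hb with h | h <;> omega
  · intro k
    exact (hP1 _ (P.equivFin.symm k).2).2.2.2.2
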